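/- arXiv:1711.07242 — 5 statements merged into one kernel-verified Lean document; each statement's English description precedes it below -/
import Mathlib

section
/- Let U be a family of maps u : [0,∞) → S closed under time translation (if u ∈ U and τ ≥ 0 then t ↦ u(t+τ) ∈ U) and under concatenation (if u, v ∈ U with v(0) = u(t̄) for some t̄ ≥ 0, then the map w with w(t) = u(t) for t ≤ t̄ and w(t) = v(t − t̄) for t > t̄ belongs to U). Suppose every u ∈ U satisfies: u(s) = u(t) implies u(r) = u(s) for all r ∈ [s,t]. Then U satisfies the ordering property: whenever u, v ∈ U with v([s,t]) ⊆ range(u), and v(l₁) = u(r₁), v(l₂) = u(r₂) with u(r₁) ≠ u(r₂) and r₁ < r₂ for l₁, l₂ ∈ [s,t], it follows that l₁ < l₂. -/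
/-- Remark 3: if `U` is closed under time translation (H1) and concatenation
(H2), and every `u ∈ U` satisfies the non-periodicity property (eq. 3), then `U` satisfies
the ordering hypothesis (H3). -/
theorem ordering_of_translation_concat_nonperiodic {S : Type*}
    (U : Set (ℝ → S))
    (h1 : ∀ u ∈ U, ∀ τ : ℝ, 0 ≤ τ → (fun t => u (t + τ)) ∈ U)
    (h2 : ∀ u ∈ U, ∀ v ∈ U, ∀ tb : ℝ, 0 ≤ tb → v 0 = u tb →
      (fun t => if t ≤ tb then u t else v (t - tb)) ∈ U)
    (heq3 : ∀ u ∈ U, ∀ s t r : ℝ, 0 ≤ s → s ≤ r → r ≤ t → u s = u t → u r = u s) :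
    ∀ u ∈ U, ∀ v ∈ U, ∀ s t : ℝ, 0 ≤ s → s < t →
      v '' Set.Icc s t ⊆ u '' Set.Ici 0 →
      ∀ l₁ ∈ Set.Icc s t, ∀ l₂ ∈ Set.Icc s t, ∀ r₁ r₂ : ℝ, 0 ≤ r₁ → 0 ≤ r₂ →
        v l₁ = u r₁ → v l₂ = u r₂ → u r₁ ≠ u r₂ → r₁ < r₂ → l₁ < l₂ := by
  intro u hu v hv s t hs hst _ l₁ hl₁ l₂ hl₂ r₁ r₂ hr₁ hr₂ hv1 hv2 hne hr
  by_contra h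
  push_neg at h
  rcases h.eq_or_lt with heq | hlt
  · exact hne (by rw [← hv1, ← hv2, heq])
  · have hl₂0 : (0:ℝ) ≤ l₂ := hs.trans hl₂.1
    have hv' := h1 v hv l₂ hl₂0
    have hw := h2 u hu _ hv' r₂ hr₂ (by simpa using hv2)
    have key := heq3 _ hw r₁ (r₂ + (l₁ - l₂)) r₂ hr₁ hr.le (by linarith)
      (by
        have h1' : r₁ ≤ r₂ := hr.le
        have h2' : ¬ (r₂ + (l₁ - l₂) ≤ r₂) := by linarith
        simp only [h1', if_pos, h2', if_neg, not_false_eq_true]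
        rw [show r₂ + (l₁ - l₂) - r₂ + l₂ = l₁ by ring, hv1])
    simp only [le_refl, if_pos, hr.le] at key
    exact hne key.symm
end

section
/- Let U be a family of maps u : [0,∞) → S satisfying the ordering hypothesis (H3): whenever u, v ∈ U with v([s,t]) ⊆ range(u) for some t > s ≥ 0, and v(l₁) = u(r₁), v(l₂) = u(r₂) with u(r₁) ≠ u(r₂) and r₁ < r₂ for l₁, l₂ ∈ [s,t], then l₁ < l₂. Then every u ∈ U satisfies: for all 0 ≤ s < t < ∞, u(s) = u(t) if and only if u(r) = u(s) for all r ∈ [s,t]. -/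
/-- if `U` satisfies the ordering hypothesis (H3), then every `u ∈ U` satisfies
the non-periodicity property (eq. 3): for `0 ≤ s < t`, `u s = u t` iff `u` is constant on
`[s,t]`. -/
theorem nonperiodic_of_ordering {S : Type*}
    (U : Set (ℝ → S))
    (h3 : ∀ u ∈ U, ∀ v ∈ U, ∀ s t : ℝ, 0 ≤ s → s < t →
      v '' Set.Icc s t ⊆ u '' Set.Ici 0 →
      ∀ l₁ ∈ Set.Icc s t, ∀ l₂ ∈ Set.Icc s t, ∀ r₁ r₂ : ℝ, 0 ≤ r₁ → 0 ≤ r₂ →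
        v l₁ = u r₁ → v l₂ = u r₂ → u r₁ ≠ u r₂ → r₁ < r₂ → l₁ < l₂) :
    ∀ u ∈ U, ∀ s t : ℝ, 0 ≤ s → s < t →
      (u s = u t ↔ ∀ r ∈ Set.Icc s t, u r = u s) := by
  intro u hu s t hs hst
  constructor
  · intro hst' r hr
    by_contra hne
    have hsub : u '' Set.Icc s t ⊆ u '' Set.Ici 0 :=
      Set.image_mono (fun x hx => le_trans hs hx.1)
    have := h3 u hu u hu s t hs hst hsub r hr s ⟨le_refl s, hst.le⟩ r t
      (le_trans hs hr.1) (le_trans hs hst.le) rfl hst'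
      (fun h => hne (h.trans hst'.symm)) (lt_of_le_of_ne hr.2 (fun h => hne (h ▸ hst'.symm)))
    exact absurd this (not_lt.2 hr.1)
  · intro h
    exact (h t ⟨hst.le, le_refl t⟩).symm
end

section
/- Let U be a generalized Λ-semiflow on a Hausdorff space S. If y, ỹ ∈ U have the same range, then for w⋆ ∈ S: there exist tₙ → ∞ with y(tₙ) → w⋆ if and only if there exist sₙ → ∞ with ỹ(sₙ) → w⋆. In other words, the set closure-range(y) depends only on the range of y. -/
open Filter Set

variable {S : Type*} [TopologicalSpace S]

/-- Increasing 1-Lipschitz reparametrization map `z : [0,∞) → [0,∞)` with `z 0 = 0`. -/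
def IncLip1 (z : ℝ → ℝ) : Prop :=
  z 0 = 0 ∧ (∀ t : ℝ, 0 ≤ t → 0 ≤ z t) ∧
    ∀ s t : ℝ, 0 ≤ s → s ≤ t → 0 ≤ z t - z s ∧ z t - z s ≤ t - s

/-- The range `u([0,∞))` of a curve. -/
def rng {S : Type*} (u : ℝ → S) : Set S := u '' Set.Ici 0

/-- `range(u)` together with all limits along sequences of times tending to `∞`. -/
def clrng (u : ℝ → S) : Set S :=
  rng u ∪ {w : S | ∃ tn : ℕ → ℝ, Tendsto tn atTop atTop ∧
    Tendsto (fun n => u (tn n)) atTop (nhds w)}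

/-- The partial order `u ≻ v`. -/
def Prec (u v : ℝ → S) : Prop :=
  rng v ⊆ clrng u ∧ ∃ z : ℝ → ℝ, IncLip1 z ∧ ∀ t : ℝ, 0 ≤ t → u t = v (z t)

/-- A generalized Λ-semiflow on `S` (Definition of the paper, hypotheses (H1)–(H5)). -/
structure GLSemiflow (S : Type*) [TopologicalSpace S] where
  sols : Set (ℝ → S)
  nonempty : sols.Nonempty
  /-- (H1) time translates of solutions are solutions -/
  h1 : ∀ u ∈ sols, ∀ τ : ℝ, 0 ≤ τ → (fun t => u (t + τ)) ∈ sols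
  /-- (H2) concatenations of solutions are solutions -/
  h2 : ∀ u ∈ sols, ∀ v ∈ sols, ∀ tb : ℝ, 0 ≤ tb → v 0 = u tb →
    (fun t => if t ≤ tb then u t else v (t - tb)) ∈ sols
  /-- (H3) there is only one direction through the range of a solution -/
  h3 : ∀ u ∈ sols, ∀ v ∈ sols, ∀ s t : ℝ, 0 ≤ s → s < t →
    v '' Set.Icc s t ⊆ rng u →
    ∀ l₁ ∈ Set.Icc s t, ∀ l₂ ∈ Set.Icc s t, ∀ r₁ r₂ : ℝ, 0 ≤ r₁ → 0 ≤ r₂ →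
      v l₁ = u r₁ → v l₂ = u r₂ → u r₁ ≠ u r₂ → r₁ < r₂ → l₁ < l₂
  /-- (H4) extension property -/
  h4 : ∀ u ∈ sols, ∀ w : ℝ → S, ∀ θ : ℝ, 0 < θ →
    (∀ T : ℝ, 0 ≤ T → T < θ → ∃ wT ∈ sols, ∀ t : ℝ, 0 ≤ t → t ≤ T → wT t = w t) →
    w '' Set.Ico 0 θ = rng u →
    ∃ ws : S, Tendsto u atTop (nhds ws) ∧
      (fun t => if t < θ then w t else ws) ∈ sols
  /-- (H5) locality -/
  h5 : ∀ w : ℝ → S,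
    (∀ T : ℝ, 0 < T → ∃ u ∈ sols, ∀ t : ℝ, 0 ≤ t → t ≤ T → u t = w t) → w ∈ sols

/-- `T⋆(u) = inf { s ≥ 0 : u(t) = u(s) for all t ≥ s } ∈ [0,∞]`. -/
noncomputable def Tstar {S : Type*} (u : ℝ → S) : ENNReal :=
  sInf (ENNReal.ofReal '' {s : ℝ | 0 ≤ s ∧ ∀ t : ℝ, s ≤ t → u t = u s})

/-- A minimal solution: `u ≻ v` implies `u = v` (as maps on `[0,∞)`). -/
def IsMinimalSol (U : Set (ℝ → S)) (u : ℝ → S) : Prop :=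
  u ∈ U ∧ ∀ v ∈ U, Prec u v → ∀ t : ℝ, 0 ≤ t → u t = v t

/-- Membership in `U[range y]`. -/
def MemURange (U : Set (ℝ → S)) (y w : ℝ → S) : Prop :=
  w ∈ U ∧ rng y ⊆ rng w ∧ rng w ⊆ clrng y ∧
    ∃ θ : ENNReal, 0 < θ ∧
      w '' {t : ℝ | 0 ≤ t ∧ ENNReal.ofReal t < θ} = rng y ∧
      w '' {t : ℝ | 0 ≤ t ∧ θ ≤ ENNReal.ofReal t} ⊆ clrng y \ rng y

/-- One direction: if `y(tₙ) → w⋆` along `tₙ → ∞`, then the same value `w⋆` is a limit of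
`ty` along times `→ ∞`, using hypothesis (H3). -/
lemma aux_clrng_dir (F : GLSemiflow S) (y ty : ℝ → S) (hy : y ∈ F.sols) (hty : ty ∈ F.sols)
    (hr : rng y = rng ty) (ws : S)
    (h : ∃ tn : ℕ → ℝ, Tendsto tn atTop atTop ∧ Tendsto (fun n => y (tn n)) atTop (nhds ws)) :
    ∃ sn : ℕ → ℝ, Tendsto sn atTop atTop ∧ Tendsto (fun n => ty (sn n)) atTop (nhds ws) := by
  obtain ⟨tn, htn, hconv⟩ := h
  -- Claim: `ty` attains the value `y (tn n)` (for some arbitrarily late `n`) at arbitrarily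
  -- large times.
  have claim : ∀ M : ℝ, ∀ N : ℕ, ∃ n, N ≤ n ∧ ∃ s, M < s ∧ 0 ≤ s ∧ ty s = y (tn n) := by
    intro M N
    by_contra hc
    push_neg at hc
    set r : ℝ := max M 0 + 1 with hrdef
    have hrM : M < r := lt_of_le_of_lt (le_max_left _ _) (lt_add_one _)
    have hr0 : (0:ℝ) ≤ r := le_trans (le_max_right _ _) (le_of_lt (lt_add_one _))
    have hmem : ty r ∈ rng y := by rw [hr]; exact ⟨r, hr0, rfl⟩
    obtain ⟨l, hl0, hlval⟩ := hmem
    obtain ⟨n, hn1, hn2⟩ := ((htn.eventually (eventually_gt_atTop (max l 0))).and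
      (eventually_ge_atTop N)).exists
    have htn0 : (0:ℝ) ≤ tn n := le_of_lt (lt_of_le_of_lt (le_max_right l 0) hn1)
    have htnl : l < tn n := lt_of_le_of_lt (le_max_left l 0) hn1
    have hmem2 : y (tn n) ∈ rng ty := by rw [← hr]; exact ⟨tn n, htn0, rfl⟩
    obtain ⟨s, hs0, hsval⟩ := hmem2
    have hs0' : (0:ℝ) ≤ s := hs0
    have hsM : s ≤ M := by
      by_contra hsM'
      exact hc n hn2 s (lt_of_not_ge hsM') hs0' hsval
    have hty_ne : ty s ≠ ty r := by
      rw [hsval]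
      exact fun hcontra => hc n hn2 r hrM hr0 hcontra.symm
    set T : ℝ := max (tn n) l + 1 with hTdef
    have hT0 : (0:ℝ) < T :=
      lt_of_le_of_lt (le_trans htn0 (le_max_left _ _)) (lt_add_one _)
    have hsub : y '' Set.Icc 0 T ⊆ rng ty := by
      rw [← hr]
      exact Set.image_mono (fun x hx => hx.1)
    have hkey := F.h3 ty hty y hy 0 T le_rfl hT0 hsub
      (tn n) ⟨htn0, le_of_lt (lt_of_le_of_lt (le_max_left _ _) (lt_add_one _))⟩
      l ⟨hl0, le_of_lt (lt_of_le_of_lt (le_max_right _ _) (lt_add_one _))⟩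
      s r hs0' hr0 hsval.symm hlval hty_ne (lt_of_le_of_lt hsM hrM)
    exact absurd hkey (not_lt_of_gt htnl)
  choose nk hnk sk hsk1 hsk2 hsk3 using fun k : ℕ => claim (k : ℝ) k
  refine ⟨sk, ?_, ?_⟩
  · exact tendsto_atTop_mono (fun k => (hsk1 k).le) tendsto_natCast_atTop_atTop
  · have hnkt : Tendsto nk atTop atTop := tendsto_atTop_mono hnk tendsto_id
    have heq : (fun k => ty (sk k)) = (fun n => y (tn n)) ∘ nk := funext fun k => hsk3 k
    rw [heq]
    exact hconv.comp hnkt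

/-- the set `closure-range(y)` depends only on the range of `y`: for solutions
`y, ỹ` with equal ranges, `w⋆` is a limit along times `→ ∞` of `y` iff it is one of `ỹ`. -/
theorem clrng_depends_only_on_range (F : GLSemiflow S) (y ty : ℝ → S)
    (hy : y ∈ F.sols) (hty : ty ∈ F.sols) (hr : rng y = rng ty) (ws : S) :
    (∃ tn : ℕ → ℝ, Tendsto tn atTop atTop ∧ Tendsto (fun n => y (tn n)) atTop (nhds ws)) ↔
      (∃ sn : ℕ → ℝ, Tendsto sn atTop atTop ∧ Tendsto (fun n => ty (sn n)) atTop (nhds ws)) := by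
  constructor
  · exact aux_clrng_dir F y ty hy hty hr ws
  · exact aux_clrng_dir F ty y hty hy hr.symm ws
end

section
/- Let U be a generalized Λ-semiflow on a Hausdorff space S. Every minimal solution u ∈ U is injective on [0, T⋆(u)), where T⋆(u) := inf { s ≥ 0 : u(t) = u(s) for all t ≥ s }. -/
open Filter Set

variable {S : Type*} [TopologicalSpace S]

/-- Consequence of (H3): if `u s = u t` then `u` is constant on `[s,t]`. -/
lemma const_between (F : GLSemiflow S) (u : ℝ → S) (hu : u ∈ F.sols)
    (s t : ℝ) (hs : 0 ≤ s) (hst : s < t) (heq : u s = u t) :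
    ∀ r ∈ Set.Icc s t, u r = u s := by
  by_contra h
  push_neg at h
  obtain ⟨r, hr, hne⟩ := h
  have himg : u '' Set.Icc s t ⊆ rng u := by
    rintro x ⟨l, hl, rfl⟩
    exact ⟨l, le_trans hs hl.1, rfl⟩
  have hsr : s < r := lt_of_le_of_ne hr.1 (by rintro rfl; exact hne rfl)
  have := F.h3 u hu u hu s t hs hst himg t ⟨hst.le, le_refl t⟩ r hr s r hs
    (le_trans hs hr.1) heq.symm rfl (fun h => hne h.symm) hsr
  exact absurd this (not_lt.mpr hr.2)

lemma key_lemma (F : GLSemiflow S) (u : ℝ → S) (hu : IsMinimalSol F.sols u)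
    (s t : ℝ) (hs : 0 ≤ s) (hst : s < t)
    (hsT : ENNReal.ofReal s < Tstar u) (heq : u s = u t) : False := by
  set d : ℝ := t - s with hd_def
  have hd : 0 < d := sub_pos.mpr hst
  have hconst : ∀ r ∈ Set.Icc s t, u r = u s := const_between F u hu.1 s t hs hst heq
  -- the spliced curve v
  have hw : (fun τ => u (τ + t)) ∈ F.sols := F.h1 u hu.1 t (by linarith)
  have hw0 : (fun τ => u (τ + t)) 0 = u s := by simp [heq]
  have hv : (fun r => if r ≤ s then u r else (fun τ => u (τ + t)) (r - s)) ∈ F.sols :=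
    F.h2 u hu.1 _ hw s hs hw0
  set v : ℝ → S := fun r => if r ≤ s then u r else u (r - s + t) with hv_def
  have hv' : v ∈ F.sols := hv
  -- Prec u v
  have hrng : rng v ⊆ clrng u := by
    rintro x ⟨r, hr0, rfl⟩
    left
    by_cases h : r ≤ s
    · exact ⟨r, hr0, by simp [hv_def, h]⟩
    · push_neg at h
      have h0 : (0:ℝ) ≤ r := hr0
      exact ⟨r - s + t, by simp only [Set.mem_Ici]; linarith, by simp [hv_def, not_le.mpr h]⟩
  set z : ℝ → ℝ := fun r => if r ≤ s then r else if r ≤ t then s else r - d with hz_def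
  have hz : IncLip1 z := by
    refine ⟨by simp [hz_def, hs], ?_, ?_⟩
    · intro r hr
      simp only [hz_def]
      split_ifs <;> linarith
    · intro a b ha hab
      simp only [hz_def]
      split_ifs <;> constructor <;> linarith
  have hzeq : ∀ r : ℝ, 0 ≤ r → u r = v (z r) := by
    intro r hr
    by_cases h1 : r ≤ s
    · have hzr : z r = r := if_pos h1
      rw [hzr, hv_def]
      simp [h1]
    · push_neg at h1
      by_cases h2 : r ≤ t
      · have hzr : z r = s := by simp [hz_def, not_le.mpr h1, h2]
        rw [hzr]
        have hvs : v s = u s := by simp [hv_def]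
        rw [hvs]
        exact hconst r ⟨h1.le, h2⟩
      · push_neg at h2
        have hzr : z r = r - d := by simp [hz_def, not_le.mpr h1, not_le.mpr h2]
        rw [hzr]
        have hns : ¬ (r - d ≤ s) := by push_neg; rw [hd_def]; linarith
        have hvr : v (r - d) = u (r - d - s + t) := by simp [hv_def, hns]
        rw [hvr]
        congr 1
        rw [hd_def]; ring
  have hprec : Prec u v := ⟨hrng, z, hz, hzeq⟩
  have hmin : ∀ r : ℝ, 0 ≤ r → u r = v r := hu.2 v hv' hprec
  -- periodicity : u r = u (r + d) for all r ≥ s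
  have hstep : ∀ r : ℝ, s ≤ r → u r = u (r + d) := by
    intro r hr
    rcases eq_or_lt_of_le hr with heq2 | hlt
    · have h3 : r + d = t := by rw [hd_def, ← heq2]; ring
      rw [h3, ← heq2]; exact heq
    · have h1 := hmin r (le_trans hs hlt.le)
      rw [hv_def] at h1
      simp only [if_neg (not_le.mpr hlt)] at h1
      have h3 : r - s + t = r + d := by rw [hd_def]; ring
      rwa [h3] at h1
  -- u r = u s for all r ∈ [s, s + (n+1)d]
  have hind : ∀ n : ℕ, ∀ r : ℝ, s ≤ r → r ≤ s + (n + 1) * d → u r = u s := by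
    intro n
    induction n with
    | zero =>
      intro r hr1 hr2
      exact hconst r ⟨hr1, by push_cast at hr2; rw [hd_def] at hr2; linarith⟩
    | succ n ih =>
      intro r hr1 hr2
      by_cases h : r ≤ s + (n + 1) * d
      · exact ih r hr1 h
      · push_neg at h
        have hnd : (0:ℝ) ≤ (n : ℝ) * d := mul_nonneg (Nat.cast_nonneg n) hd.le
        have hr1' : s ≤ r - d := by push_cast at h; nlinarith
        have hr2' : r - d ≤ s + (n + 1) * d := by push_cast at hr2 ⊢; nlinarith
        have := hstep (r - d) hr1'
        rw [sub_add_cancel] at this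
        rw [← this]
        exact ih (r - d) hr1' hr2'
  -- hence u is constant on [s, ∞)
  have hsmem : ∀ t' : ℝ, s ≤ t' → u t' = u s := by
    intro t' ht'
    obtain ⟨n, hn⟩ := exists_nat_gt ((t' - s) / d)
    have : t' - s < n * d := by
      rwa [div_lt_iff₀ hd] at hn
    exact hind n t' ht' (by nlinarith)
  have hle : Tstar u ≤ ENNReal.ofReal s :=
    sInf_le ⟨s, ⟨hs, hsmem⟩, rfl⟩
  exact absurd hle (not_le.mpr hsT)

/-- every minimal solution of a generalized Λ-semiflow is injective on
`[0, T⋆(u))`. -/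
theorem minimal_injective_before_Tstar (F : GLSemiflow S) (u : ℝ → S)
    (hu : IsMinimalSol F.sols u) :
    ∀ s t : ℝ, 0 ≤ s → 0 ≤ t →
      ENNReal.ofReal s < Tstar u → ENNReal.ofReal t < Tstar u → u s = u t → s = t := by
  intro s t hs ht hsT htT heq
  rcases lt_trichotomy s t with h | h | h
  · exact absurd (key_lemma F u hu s t hs h hsT heq) id
  · exact h
  · exact absurd (key_lemma F u hu t s ht h htT heq.symm) id
end

section
/- Let U be a generalized Λ-semiflow on a Hausdorff space S. If u is a minimal solution and τ ≥ 0, then the time translate u^τ(t) := u(t + τ) is also a minimal solution. -/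
open Filter Set

variable {S : Type*} [TopologicalSpace S]

/-- time translates of minimal solutions are minimal solutions. -/
theorem minimal_translate (F : GLSemiflow S) (u : ℝ → S)
    (hu : IsMinimalSol F.sols u) (τ : ℝ) (hτ : 0 ≤ τ) :
    IsMinimalSol F.sols (fun t => u (t + τ)) := by
  obtain ⟨huS, humin⟩ := hu
  refine ⟨F.h1 u huS τ hτ, ?_⟩
  intro v hv hprec t ht
  obtain ⟨hrng, z, ⟨hz0, hznn, hzlip⟩, hvz⟩ := hprec
  have hv0 : v 0 = u τ := by
    have h := hvz 0 le_rfl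
    simp only [zero_add, hz0] at h
    exact h.symm
  set w : ℝ → S := fun t => if t ≤ τ then u t else v (t - τ) with hw_def
  have hwS : w ∈ F.sols := F.h2 u huS v hv τ hτ hv0
  have hclsub : clrng (fun t => u (t + τ)) ⊆ clrng u := by
    intro x hx
    rcases hx with hx | hx
    · obtain ⟨s, hs, rfl⟩ := hx
      exact Or.inl ⟨s + τ, add_nonneg hs hτ, rfl⟩
    · obtain ⟨tn, htn, hlim⟩ := hx
      exact Or.inr ⟨fun n => tn n + τ,
        tendsto_atTop_add_const_right atTop τ htn, hlim⟩
  have hwrng : rng w ⊆ clrng u := by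
    rintro x ⟨s, hs, rfl⟩
    by_cases hsτ : s ≤ τ
    · exact Or.inl ⟨s, hs, by simp [hw_def, hsτ]⟩
    · have hws : w s = v (s - τ) := if_neg hsτ
      rw [hws]
      exact hclsub (hrng ⟨s - τ, by
        simp only [Set.mem_Ici]; linarith [lt_of_not_ge hsτ], rfl⟩)
  set z' : ℝ → ℝ := fun t => if t ≤ τ then t else τ + z (t - τ) with hz'_def
  have hz'lip : IncLip1 z' := by
    refine ⟨by simp [hz'_def, hτ], ?_, ?_⟩
    · intro t ht
      by_cases h : t ≤ τ
      · simpa [hz'_def, h] using ht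
      · have h1 := hznn (t - τ) (by linarith [lt_of_not_ge h])
        simp only [hz'_def, if_neg h]
        linarith
    · intro s t hs hst
      by_cases h1 : t ≤ τ
      · have h2 : s ≤ τ := le_trans hst h1
        simp only [hz'_def, if_pos h1, if_pos h2]
        exact ⟨by linarith, by linarith⟩
      · by_cases h2 : s ≤ τ
        · have hb := hzlip 0 (t - τ) le_rfl (by linarith [lt_of_not_ge h1])
          simp only [hz'_def, if_neg h1, if_pos h2, hz0, sub_zero] at hb ⊢
          constructor <;> linarith
        · have hb := hzlip (s - τ) (t - τ) (by linarith [lt_of_not_ge h2])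
            (by linarith)
          simp only [hz'_def, if_neg h1, if_neg h2]
          constructor <;> linarith
  have huw : ∀ t : ℝ, 0 ≤ t → u t = w (z' t) := by
    intro t ht
    by_cases h : t ≤ τ
    · simp [hz'_def, hw_def, h]
    · have ht' : 0 ≤ t - τ := by linarith [lt_of_not_ge h]
      have hv' : u t = v (z (t - τ)) := by
        have h2 := hvz (t - τ) ht'
        simpa [sub_add_cancel] using h2
      simp only [hz'_def, if_neg h]
      by_cases h2 : τ + z (t - τ) ≤ τ
      · have hz0' : z (t - τ) = 0 := le_antisymm (by linarith) (hznn _ ht')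
        simp only [hw_def, if_pos h2, hz0', add_zero]
        rw [hv', hz0', if_pos (le_refl τ)]
        exact hv0
      · simp only [hw_def, if_neg h2, add_sub_cancel_left]
        exact hv'
  have key := humin w hwS ⟨hwrng, z', hz'lip, huw⟩
  have h1 := key (t + τ) (by linarith)
  show u (t + τ) = v t
  by_cases h : t + τ ≤ τ
  · have ht0 : t = 0 := le_antisymm (by linarith) ht
    subst ht0
    rw [h1]
    simp only [hw_def, if_pos h, zero_add, if_pos (le_refl τ)]
    exact hv0.symm
  · simp only [hw_def, if_neg h, add_sub_cancel_right] at h1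
    exact h1
end
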